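/- Every GNO-preferred answer set of a logic program with preferences is a preferred answer set under the fragment-based semantics G (i.e., GNO ⊆ G). -/

import Mathlib

/-- A literal over atoms `A`: `(true, a)` is the atom `a`, `(false, a)` is `¬ a`. -/
abbrev Lit (A : Type) := Bool × A

/-- A rule with head, positive body and negative body. -/
structure Rule (A : Type) where
  head : Lit A
  pos : Set (Lit A)
  neg : Set (Lit A)

variable {A : Type}

/-- Heads of a set of rules. -/
def headSet (R : Set (Rule A)) : Set (Lit A) := Rule.head '' R

/-- `R ⊆ P` positively satisfies `P`. -/
def PosSat (P R : Set (Rule A)) : Prop :=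
  R ⊆ P ∧ ∀ r ∈ P, r.pos ⊆ headSet R → r ∈ R

/-- The minimal set of rules positively satisfying `P`. -/
def MP (P : Set (Rule A)) : Set (Rule A) := ⋂₀ {R | PosSat P R}

/-- A set of rules defeats a rule. -/
def defeatsRule (R : Set (Rule A)) (r : Rule A) : Prop :=
  (headSet R ∩ r.neg).Nonempty

/-- A set of rules defeats a set of rules. -/
def defeatsSet (R₁ R₂ : Set (Rule A)) : Prop := ∃ r ∈ R₂, defeatsRule R₁ r

/-- The reduct `P^R` removes each rule defeated by `R`. -/
def reduct (P R : Set (Rule A)) : Set (Rule A) := {r ∈ P | ¬ defeatsRule R r}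

/-- `R ⊆ P` is a generating set of `P` iff `R = MP (P^R)`. -/
def GenSet (P R : Set (Rule A)) : Prop := R ⊆ P ∧ R = MP (reduct P R)

/-- A set of literals is consistent iff it contains no complementary pair. -/
def Consistent (S : Set (Lit A)) : Prop :=
  ∀ a : A, ¬ (((true, a) ∈ S) ∧ ((false, a) ∈ S))

/-- Answer sets via generating sets. -/
def AnswerSet (P : Set (Rule A)) (S : Set (Lit A)) : Prop :=
  Consistent S ∧ ∃ R, GenSet P R ∧ headSet R = S

/-- `Γ_S(P)`: rules whose positive body is in `S` and negative body disjoint from `S`. -/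
def Gamma (S : Set (Lit A)) (P : Set (Rule A)) : Set (Rule A) :=
  {r ∈ P | r.pos ⊆ S ∧ r.neg ∩ S = ∅}

/-- Fragments of a program. -/
def Frag (P : Set (Rule A)) : Set (Set (Rule A)) := {R | R ⊆ P ∧ MP R = R}

/-- Fragment reduct: remove fragments defeated by a member of `E`. -/
def fragReduct (P : Set (Rule A)) (E : Set (Set (Rule A))) : Set (Set (Rule A)) :=
  {X ∈ Frag P | ¬ ∃ Y ∈ E, defeatsSet Y X}

/-- Stable fragment sets. -/
def StableFragSet (P : Set (Rule A)) (E : Set (Set (Rule A))) : Prop :=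
  E ⊆ Frag P ∧ fragReduct P E = E

/-- Mutually defeating (conflicting) sets of rules. -/
def Conflicting (X Y : Set (Rule A)) : Prop := defeatsSet X Y ∧ defeatsSet Y X

/-- `X` overrides `Y` w.r.t. the preference relation `lt`. -/
def Overrides (lt : Rule A → Rule A → Prop) (X Y : Set (Rule A)) : Prop :=
  Conflicting X Y ∧
    ∀ r₁ ∈ X, defeatsRule Y r₁ → ∃ r₂ ∈ Y, defeatsRule X r₂ ∧ lt r₂ r₁

/-- Preferred fragment reduct (semantics G). -/
def prefFragReduct (lt : Rule A → Rule A → Prop) (P : Set (Rule A))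
    (E : Set (Set (Rule A))) : Set (Set (Rule A)) :=
  {X ∈ Frag P | ¬ ∃ Y ∈ E, defeatsSet Y X ∧ ¬ Overrides lt X Y}

/-- Preferred stable fragment sets (semantics G). -/
def PrefStableFragSet (lt : Rule A → Rule A → Prop) (P : Set (Rule A))
    (E : Set (Set (Rule A))) : Prop :=
  E ⊆ Frag P ∧ prefFragReduct lt P E = E

/-- Preferred answer sets under the fragment-based semantics G. -/
def GPrefAnswerSet (lt : Rule A → Rule A → Prop) (P : Set (Rule A))
    (S : Set (Lit A)) : Prop :=
  Consistent S ∧ ∃ E, PrefStableFragSet lt P E ∧ headSet (⋃₀ E) = S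

/-- `T(r,R)` for semantics GNO. -/
def Trules (lt : Rule A → Rule A → Prop) (r : Rule A) (R : Set (Rule A)) :
    Set (Rule A) :=
  MP {p ∈ R | ¬ lt p r}

/-- GNO reduct: remove rules `r` with `body⁻(r) ∩ head(T(r,R)) ≠ ∅`. -/
def gnoReduct (lt : Rule A → Rule A → Prop) (P R : Set (Rule A)) : Set (Rule A) :=
  {r ∈ P | ¬ (r.neg ∩ headSet (Trules lt r R)).Nonempty}

/-- GNO-preferred generating sets. -/
def GNOPrefGen (lt : Rule A → Rule A → Prop) (P R : Set (Rule A)) : Prop :=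
  GenSet P R ∧ R = MP (gnoReduct lt P R)

/-- GNO-preferred answer sets. -/
def GNOPrefAnswerSet (lt : Rule A → Rule A → Prop) (P : Set (Rule A))
    (S : Set (Lit A)) : Prop :=
  Consistent S ∧ ∃ R, GNOPrefGen lt P R ∧ headSet R = S

/-- A rule defeats a rule. -/
def defeats (r₁ r₂ : Rule A) : Prop := r₁.head ∈ r₂.neg

/-- `r₁` directly overrides `r₂` w.r.t. `lt`. -/
def DirOverrides (lt : Rule A → Rule A → Prop) (r₁ r₂ : Rule A) : Prop :=
  (defeats r₁ r₂ ∧ defeats r₂ r₁) ∧ lt r₂ r₁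

/-- D-reduct for the direct-conflict semantics. -/
def dReduct (lt : Rule A → Rule A → Prop) (P R : Set (Rule A)) : Set (Rule A) :=
  {r₁ ∈ P | ¬ ∃ r₂ ∈ R, defeats r₂ r₁ ∧ ¬ DirOverrides lt r₁ r₂}

/-- D-preferred generating sets. -/
def DPrefGen (lt : Rule A → Rule A → Prop) (P R : Set (Rule A)) : Prop :=
  R = MP (dReduct lt P R)

/-- D-preferred answer sets. -/
def DPrefAnswerSet (lt : Rule A → Rule A → Prop) (P : Set (Rule A))
    (S : Set (Lit A)) : Prop :=
  Consistent S ∧ ∃ R, DPrefGen lt P R ∧ headSet R = S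

/-- Stratified programs. -/
def Stratified (P : Set (Rule A)) : Prop :=
  ∃ lam : Lit A → ℕ, ∀ r ∈ P,
    (∀ l ∈ r.pos, lam l ≤ lam r.head) ∧ (∀ l ∈ r.neg, lam l < lam r.head)

lemma headSet_mono {R₁ R₂ : Set (Rule A)} (h : R₁ ⊆ R₂) : headSet R₁ ⊆ headSet R₂ :=
  Set.image_mono h

lemma MP_subset (Q : Set (Rule A)) : MP Q ⊆ Q :=
  Set.sInter_subset_of_mem ⟨Set.Subset.rfl, fun r hr _ => hr⟩

lemma MP_min {Q Z : Set (Rule A)} (h : PosSat Q Z) : MP Q ⊆ Z :=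
  Set.sInter_subset_of_mem h

lemma posSat_MP (Q : Set (Rule A)) : PosSat Q (MP Q) := by
  refine ⟨MP_subset Q, fun r hr hpos => ?_⟩
  refine Set.mem_sInter.2 fun Z hZ => ?_
  exact hZ.2 r hr (hpos.trans (headSet_mono (Set.sInter_subset_of_mem hZ)))

lemma MP_idem (Q : Set (Rule A)) : MP (MP Q) = MP Q := by
  refine Set.Subset.antisymm (MP_subset _) (MP_min ⟨(MP_subset _).trans (MP_subset _), ?_⟩)
  intro r hr hpos
  have hrMQ : r ∈ MP Q :=
    (posSat_MP Q).2 r hr (hpos.trans (headSet_mono ((MP_subset (MP Q)))))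
  exact (posSat_MP (MP Q)).2 r hrMQ hpos

/-- GNO ⊆ G. -/
theorem gno_subset_g (P : Set (Rule A)) (hP : P.Finite)
    (lt : Rule A → Rule A → Prop) (htrans : Transitive lt)
    (hasymm : ∀ r₁ r₂, lt r₁ r₂ → ¬ lt r₂ r₁)
    (S : Set (Lit A)) (h : GNOPrefAnswerSet lt P S) :
    GPrefAnswerSet lt P S := by
  obtain ⟨hcons, R, ⟨⟨hRP, hRgen⟩, hRgno⟩, hhead⟩ := h
  -- basic facts about R
  have hpsRed : PosSat (reduct P R) R := by
    have := posSat_MP (reduct P R); rwa [← hRgen] at this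
  have hpsGno : PosSat (gnoReduct lt P R) R := by
    have := posSat_MP (gnoReduct lt P R); rwa [← hRgno] at this
  have hMPR : MP R = R := by
    conv_lhs => rw [hRgen]
    rw [MP_idem, ← hRgen]
  have noDefeatR : ∀ r ∈ R, ¬ defeatsRule R r := fun r hr => (hpsRed.1 hr).2
  -- the stable fragment set
  set E : Set (Set (Rule A)) := {X | X ⊆ R ∧ MP X = X} with hE
  have hRE : R ∈ E := ⟨Set.Subset.rfl, hMPR⟩
  have hEF : E ⊆ Frag P := fun X hX => ⟨hX.1.trans hRP, hX.2⟩
  -- members of E are never defeated by members of E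
  have hnodef : ∀ X ∈ E, ∀ Y ∈ E, ¬ defeatsSet Y X := by
    rintro X hX Y hY ⟨r, hrX, l, hlY, hlneg⟩
    exact noDefeatR r (hX.1 hrX) ⟨l, headSet_mono hY.1 hlY, hlneg⟩
  refine ⟨hcons, E, ⟨hEF, ?_⟩, ?_⟩
  · -- prefFragReduct lt P E = E
    apply Set.Subset.antisymm
    · rintro X ⟨hXF, hXnd⟩
      refine ⟨?_, hXF.2⟩
      -- show X ⊆ R
      have hover : ∀ Y ∈ E, defeatsSet Y X → Overrides lt X Y := by
        intro Y hY hdef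
        by_contra hno
        exact hXnd ⟨Y, hY, hdef, hno⟩
      have hps : PosSat X (X ∩ R) := by
        refine ⟨Set.inter_subset_left, fun x hx hpos => ?_⟩
        refine ⟨hx, ?_⟩
        have hposR : x.pos ⊆ headSet R :=
          hpos.trans (headSet_mono Set.inter_subset_right)
        by_cases hg : x ∈ gnoReduct lt P R
        · exact hpsGno.2 x hg hposR
        · exfalso
          have hxP : x ∈ P := hXF.1 hx
          have hne : (x.neg ∩ headSet (Trules lt x R)).Nonempty := by
            by_contra hc
            exact hg ⟨hxP, hc⟩
          set Y : Set (Rule A) := Trules lt x R with hYdef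
          have hYR : Y ⊆ R := (MP_subset _).trans (Set.sep_subset _ _)
          have hYE : Y ∈ E := ⟨hYR, MP_idem _⟩
          have hdYx : defeatsRule Y x := by
            obtain ⟨l, hl1, hl2⟩ := hne
            exact ⟨l, hl2, hl1⟩
          have hdef : defeatsSet Y X := ⟨x, hx, hdYx⟩
          obtain ⟨r₂, hr₂Y, _, hlt⟩ := (hover Y hYE hdef).2 x hx hdYx
          exact ((MP_subset _) hr₂Y).2 hlt
      have : X ⊆ R := by
        have h1 : MP X ⊆ X ∩ R := MP_min hps
        rw [hXF.2] at h1
        exact h1.trans Set.inter_subset_right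
      exact this
    · intro X hX
      refine ⟨hEF hX, ?_⟩
      rintro ⟨Y, hY, hdef, _⟩
      exact hnodef X hX Y hY hdef
  · -- heads
    have : ⋃₀ E = R :=
      Set.Subset.antisymm (Set.sUnion_subset fun X hX => hX.1)
        (Set.subset_sUnion_of_mem hRE)
    rw [this, hhead]
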